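/- Let X, Y be real symmetric N×N matrices with Y positive definite, set Z = X + iY and C = i Y^{-1/2} [−Z, I_N] ∈ ℂ^{N×2N}. Then Σ · Im(C† C) = −I_{2N}, where Σ = [[0, I_N], [−I_N, 0]], C† is the conjugate transpose of C, and Im denotes the entrywise imaginary part. -/

import Mathlib

open Matrix

lemma map_re_mul {m n p : Type*} [Fintype n] (A : Matrix m n ℂ) (B : Matrix n p ℂ) :
    (A * B).map Complex.re
      = A.map Complex.re * B.map Complex.re - A.map Complex.im * B.map Complex.im := by
  ext i j
  simp [Matrix.map_apply, Matrix.mul_apply, Complex.re_sum, Complex.mul_re,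
    Finset.sum_sub_distrib]

lemma map_im_mul {m n p : Type*} [Fintype n] (A : Matrix m n ℂ) (B : Matrix n p ℂ) :
    (A * B).map Complex.im
      = A.map Complex.re * B.map Complex.im + A.map Complex.im * B.map Complex.re := by
  ext i j
  simp [Matrix.map_apply, Matrix.mul_apply, Complex.im_sum, Complex.mul_im,
    Finset.sum_add_distrib]

/-- Σ · Im(C†C) = −I for C = i Y^{-1/2}[−Z, I]. -/
theorem stmt3 (N : ℕ) (hN : 0 < N)
    (X Y Ysq : Matrix (Fin N) (Fin N) ℝ)
    (hX : X.IsSymm) (hY : Y.IsSymm) (hYpd : Y.PosDef)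
    (hYsqPD : Ysq.PosDef) (hYsqSym : Ysq.IsSymm) (hYsq : Ysq * Ysq = Y)
    (Z : Matrix (Fin N) (Fin N) ℂ)
    (hZ : Z = X.map (fun a => (a : ℂ)) + Complex.I • Y.map (fun a => (a : ℂ)))
    (C : Matrix (Fin N) (Fin N ⊕ Fin N) ℂ)
    (hC : C = Complex.I • ((Ysq⁻¹).map (fun a => (a : ℂ)) * fromCols (-Z) 1))
    (Sg : Matrix (Fin N ⊕ Fin N) (Fin N ⊕ Fin N) ℝ)
    (hSg : Sg = fromBlocks 0 1 (-1) 0) :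
    Sg * (Cᴴ * C).map Complex.im = -1 := by
  have hd : IsUnit Ysq.det := hYsqPD.det_pos.ne'.isUnit
  set W : Matrix (Fin N) (Fin N) ℝ := Ysq⁻¹ with hW
  set V : Matrix (Fin N) (Fin N) ℝ := W * W with hVdef
  have h1 : Ysq * Ysq⁻¹ = 1 := Matrix.mul_nonsing_inv _ hd
  have h2 : Ysq⁻¹ * Ysq = 1 := Matrix.nonsing_inv_mul _ hd
  have hYV : Y * V = 1 := by
    rw [← hYsq, hVdef, hW, Matrix.mul_assoc, ← Matrix.mul_assoc Ysq Ysq⁻¹ Ysq⁻¹,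
      h1, Matrix.one_mul, h1]
  have hVY : V * Y = 1 := by
    rw [← hYsq, hVdef, hW, Matrix.mul_assoc, ← Matrix.mul_assoc Ysq⁻¹ Ysq Ysq,
      h2, Matrix.one_mul, h2]
  -- complex lifts
  set Wc : Matrix (Fin N) (Fin N) ℂ := W.map (fun a => (a : ℂ)) with hWc
  have hWsymm : W.IsSymm := by
    rw [hW, Matrix.IsSymm, Matrix.transpose_nonsing_inv, hYsqSym]
  have hWcH : Wcᴴ = Wc := by
    ext i j
    simp [hWc, Matrix.conjTranspose_apply, Matrix.map_apply, hWsymm.apply]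
  -- conjugate transpose of C
  have hCH : Cᴴ = (-Complex.I) • (fromRows (-Zᴴ) 1 * Wc) := by
    rw [hC, Matrix.conjTranspose_smul, Matrix.conjTranspose_mul,
      conjTranspose_fromCols_eq_fromRows_conjTranspose, hWcH]
    simp [Complex.star_def, Complex.conj_I]
  have key : Cᴴ * C = fromBlocks (Zᴴ * (V.map (fun a => (a : ℂ)) * Z))
      (-(Zᴴ * V.map (fun a => (a : ℂ)))) (-(V.map (fun a => (a : ℂ)) * Z))
      (V.map (fun a => (a : ℂ))) := by
    rw [hCH, hC, Matrix.smul_mul, Matrix.mul_smul, smul_smul, neg_mul,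
      Complex.I_mul_I, neg_neg, one_smul]
    have hVc : (V.map (fun a => (a : ℂ))) = Wc * Wc := by
      ext i j
      simp [hVdef, hWc, Matrix.mul_apply, Matrix.map_apply]
    rw [hVc, Matrix.fromRows_mul, Matrix.mul_fromCols, Matrix.one_mul, Matrix.mul_one,
      Matrix.fromRows_mul_fromCols]
    simp [mul_neg, neg_mul, Matrix.mul_assoc]
  -- real and imaginary parts of Z and Zᴴ
  have hZre : Z.map Complex.re = X := by
    ext i j; simp [hZ, Matrix.map_apply]
  have hZim : Z.map Complex.im = Y := by
    ext i j; simp [hZ, Matrix.map_apply]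
  have hZHre : (Zᴴ).map Complex.re = X := by
    ext i j; simp [hZ, Matrix.conjTranspose_apply, Matrix.map_apply, hX.apply]
  have hZHim : (Zᴴ).map Complex.im = -Y := by
    ext i j; simp [hZ, Matrix.conjTranspose_apply, Matrix.map_apply, hY.apply]
  have hVre : (V.map (fun a => (a : ℂ))).map Complex.re = V := by
    ext i j; simp [Matrix.map_apply]
  have hVim : (V.map (fun a => (a : ℂ))).map Complex.im = 0 := by
    ext i j; simp [Matrix.map_apply]
  -- imaginary parts of the blocks
  have hB : (Zᴴ * V.map (fun a => (a : ℂ))).map Complex.im = -1 := by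
    rw [map_im_mul, hVre, hVim, hZHim, Matrix.mul_zero, zero_add, Matrix.neg_mul, hYV]
  have hCblk : (V.map (fun a => (a : ℂ)) * Z).map Complex.im = 1 := by
    rw [map_im_mul, hVre, hVim, hZim, Matrix.zero_mul, add_zero, hVY]
  have hCblkre : (V.map (fun a => (a : ℂ)) * Z).map Complex.re = V * X := by
    rw [map_re_mul, hVre, hVim, hZre, Matrix.zero_mul, sub_zero]
  have hA : (Zᴴ * (V.map (fun a => (a : ℂ)) * Z)).map Complex.im = 0 := by
    rw [map_im_mul, hCblk, hCblkre, hZHre, hZHim, Matrix.mul_one, Matrix.neg_mul,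
      ← Matrix.mul_assoc, hYV, Matrix.one_mul, add_neg_cancel]
  have hneg : ∀ (M : Matrix (Fin N) (Fin N) ℂ), (-M).map Complex.im = -(M.map Complex.im) := by
    intro M; ext i j; simp [Matrix.map_apply]
  have himC : (Cᴴ * C).map Complex.im = fromBlocks 0 1 (-1) 0 := by
    rw [key, Matrix.fromBlocks_map, hA, hneg, hneg, hB, hCblk, hVim, neg_neg]
  rw [himC, hSg, Matrix.fromBlocks_multiply]
  have : (-1 : Matrix (Fin N ⊕ Fin N) (Fin N ⊕ Fin N) ℝ)
      = fromBlocks (-1) 0 0 (-1) := by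
    rw [← Matrix.fromBlocks_one, Matrix.fromBlocks_neg, neg_zero]
  rw [this]
  simp
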